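/- Let D_n = (p_n, e_n, m_n) be the random process with arbitrary initial state (p₀,e₀,m₀) satisfying p₀,e₀,m₀ ≥ 0, p₀+e₀+m₀ = 1, where at each step, independently with probability 1/2 each, D_{n+1} is the variable-node transform (p²+2pe, e²+2pm, m²+2em) or the check-node transform (p²+m², 1-(1-e)², 2pm) of D_n. Define I_n = I(D_n) with I(p,e,m) = (m+p)(1 - h₂(p/(p+m))). Then (I_n) is a supermartingale, i.e., E[I_{n+1} | D_n] ≤ I_n. -/

import Mathlib

open MeasureTheory ProbabilityTheory

/-- Binary entropy function (base 2). -/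
noncomputable def h2 (x : ℝ) : ℝ := -(x * Real.logb 2 x) - (1 - x) * Real.logb 2 (1 - x)

/-- Capacity of the ternary density `(p,e,m)`. -/
noncomputable def Icap (d : ℝ × ℝ × ℝ) : ℝ := (d.2.2 + d.1) * (1 - h2 (d.1 / (d.1 + d.2.2)))

/-- Variable-node transform of a ternary density `(p,e,m)`. -/
def vplus (d : ℝ × ℝ × ℝ) : ℝ × ℝ × ℝ :=
  (d.1^2 + 2*d.1*d.2.1, d.2.1^2 + 2*d.1*d.2.2, d.2.2^2 + 2*d.2.1*d.2.2)

/-- Check-node transform of a ternary density `(p,e,m)`. -/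
def vminus (d : ℝ × ℝ × ℝ) : ℝ × ℝ × ℝ :=
  (d.1^2 + d.2.2^2, 1 - (1 - d.2.1)^2, 2*d.1*d.2.2)



lemma h2_eq (x : ℝ) : h2 x = (Real.log 2)⁻¹ * Real.binEntropy x := by
  simp only [h2, Real.binEntropy, Real.logb, Real.log_inv, div_eq_inv_mul]
  ring

lemma concave_h2 : ConcaveOn ℝ (Set.Icc (0:ℝ) 1) h2 := by
  have h := Real.strictConcave_binEntropy.concaveOn
  have h2eq : h2 = (Real.log 2)⁻¹ • Real.binEntropy := by
    funext x; rw [h2_eq]; rfl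
  rw [h2eq]
  exact h.smul (by positivity)

lemma h2_nonneg {x : ℝ} (hx : x ∈ Set.Icc (0:ℝ) 1) : 0 ≤ h2 x := by
  rw [h2_eq]
  have := Real.binEntropy_nonneg hx.1 hx.2
  positivity

lemma h2_le_one (x : ℝ) : h2 x ≤ 1 := by
  rw [h2_eq]
  rw [inv_mul_le_iff₀ (by positivity : (0:ℝ) < Real.log 2), mul_one]
  exact Real.binEntropy_le_log_two

lemma mul_logb_div {x y : ℝ} (hx : 0 ≤ x) (hy : 0 < y) :
    x * Real.logb 2 (x / y) = x * Real.logb 2 x - x * Real.logb 2 y := by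
  rcases hx.eq_or_lt with h | h
  · simp [← h]
  · rw [Real.logb_div h.ne' hy.ne']; ring

lemma entPair {x y : ℝ} (hx : 0 ≤ x) (hy : 0 ≤ y) (hxy : 0 < x + y) :
    (x + y) * h2 (x / (x + y)) =
      -(x * Real.logb 2 x) - y * Real.logb 2 y + (x + y) * Real.logb 2 (x + y) := by
  have h1 : 1 - x / (x + y) = y / (x + y) := by field_simp; ring
  have ex := mul_logb_div hx hxy
  have ey := mul_logb_div hy hxy
  unfold h2
  rw [h1]
  have hne : x + y ≠ 0 := hxy.ne'
  have hx' : (x + y) * (x / (x + y) * Real.logb 2 (x / (x + y)))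
      = x * Real.logb 2 (x / (x + y)) := by field_simp
  have hy' : (x + y) * (y / (x + y) * Real.logb 2 (y / (x + y)))
      = y * Real.logb 2 (y / (x + y)) := by field_simp
  calc (x + y) * (-(x / (x + y) * Real.logb 2 (x / (x + y)))
        - y / (x + y) * Real.logb 2 (y / (x + y)))
      = -((x + y) * (x / (x + y) * Real.logb 2 (x / (x + y))))
        - (x + y) * (y / (x + y) * Real.logb 2 (y / (x + y))) := by ring
    _ = -(x * Real.logb 2 (x / (x + y))) - y * Real.logb 2 (y / (x + y)) := by rw [hx', hy']
    _ = _ := by rw [ex, ey]; ring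

lemma pm_logb {p m : ℝ} (hp : 0 ≤ p) (hm : 0 ≤ m) :
    p * m * Real.logb 2 (2 * (p * m)) = p * m * (1 + Real.logb 2 p + Real.logb 2 m) := by
  rcases hp.eq_or_lt with h | h
  · simp [← h]
  rcases hm.eq_or_lt with h' | h'
  · simp [← h']
  rw [show (2:ℝ) * (p * m) = 2 * p * m by ring,
    Real.logb_mul (by positivity) h'.ne',
    Real.logb_mul (two_ne_zero) h.ne',
    Real.logb_self_eq_one (by norm_num)]

lemma jensen2 {W1 W2 x1 x2 : ℝ} (h1 : 0 ≤ W1) (h2' : 0 ≤ W2) (hT : 0 < W1 + W2)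
    (hx1 : x1 ∈ Set.Icc (0:ℝ) 1) (hx2 : x2 ∈ Set.Icc (0:ℝ) 1) :
    W1 * h2 x1 + W2 * h2 x2 ≤ (W1 + W2) * h2 ((W1 * x1 + W2 * x2) / (W1 + W2)) := by
  have hc := concave_h2.2 hx1 hx2 (div_nonneg h1 hT.le) (div_nonneg h2' hT.le)
    (by field_simp)
  simp only [smul_eq_mul] at hc
  have harg : W1 / (W1 + W2) * x1 + W2 / (W1 + W2) * x2 = (W1 * x1 + W2 * x2) / (W1 + W2) := by
    field_simp
  rw [harg] at hc
  calc W1 * h2 x1 + W2 * h2 x2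
      = (W1 + W2) * (W1 / (W1 + W2) * h2 x1 + W2 / (W1 + W2) * h2 x2) := by
        field_simp
    _ ≤ (W1 + W2) * h2 ((W1 * x1 + W2 * x2) / (W1 + W2)) :=
        mul_le_mul_of_nonneg_left hc hT.le




lemma logb_sq (x : ℝ) : Real.logb 2 (x^2) = 2 * Real.logb 2 x := by
  rw [Real.logb, Real.logb, Real.log_pow]; push_cast; ring

lemma key {p e m : ℝ} (hp : 0 ≤ p) (he : 0 ≤ e) (hm : 0 ≤ m) (hsum : p + e + m = 1) :
    Icap (vplus (p, e, m)) + Icap (vminus (p, e, m)) ≤ 2 * Icap (p, e, m) := by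
  have he' : e = 1 - p - m := by linarith
  subst he'
  rcases eq_or_lt_of_le (by positivity : (0:ℝ) ≤ p + m) with hs0 | hs
  · have hp0 : p = 0 := by linarith
    have hm0 : m = 0 := by linarith
    subst hp0; subst hm0
    simp [Icap, vplus, vminus, h2]
  have hA : (0:ℝ) < p^2 + m^2 := by
    rcases lt_or_ge 0 p with h | h
    · positivity
    · have hp0 : p = 0 := le_antisymm h hp
      have : 0 < m := by nlinarith
      positivity
  have hT : (0:ℝ) < (p^2 + m^2) + 2*(1-p-m)*(p+m) := by nlinarith
  -- expansions
  have e5 : (p+m) * h2 (p/(p+m)) = -(p * Real.logb 2 p) - m * Real.logb 2 m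
      + (p+m) * Real.logb 2 (p+m) := entPair hp hm hs
  have e1 : Icap (p, 1-p-m, m) = (p+m) + p * Real.logb 2 p + m * Real.logb 2 m
      - (p+m) * Real.logb 2 (p+m) := by
    simp only [Icap]
    linear_combination -e5
  have e4 : (p^2+m^2) * h2 (p^2/(p^2+m^2)) =
      -(2*(p^2 * Real.logb 2 p)) - 2*(m^2 * Real.logb 2 m)
      + (p^2+m^2) * Real.logb 2 (p^2+m^2) := by
    have h := entPair (by positivity : (0:ℝ) ≤ p^2) (by positivity : (0:ℝ) ≤ m^2) hA
    rw [logb_sq, logb_sq] at h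
    linear_combination h
  have e2 : Icap (vminus (p, 1-p-m, m)) = (p+m)^2 + (p^2+m^2) * Real.logb 2 (p^2+m^2)
      + 2*p*m + 2*p*m * Real.logb 2 p + 2*p*m * Real.logb 2 m
      - 2*(p+m)^2 * Real.logb 2 (p+m) := by
    have hs2 : (0:ℝ) < (p^2 + m^2) + 2*p*m := by nlinarith
    have h := entPair (by positivity : (0:ℝ) ≤ p^2+m^2) (by positivity : (0:ℝ) ≤ 2*p*m) hs2
    have hLsq : Real.logb 2 (p^2+m^2 + 2*p*m) = 2 * Real.logb 2 (p+m) := by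
      rw [show p^2+m^2+2*p*m = (p+m)^2 by ring, logb_sq]
    have hpm : 2*p*m * Real.logb 2 (2*p*m) = 2*p*m*(1 + Real.logb 2 p + Real.logb 2 m) := by
      rcases hp.eq_or_lt with h0 | h0
      · simp [← h0]
      rcases hm.eq_or_lt with h1 | h1
      · simp [← h1]
      rw [Real.logb_mul (by positivity) h1.ne', Real.logb_mul (two_ne_zero) h0.ne',
        Real.logb_self_eq_one (by norm_num)]
    rw [hLsq] at h
    simp only [Icap, vminus]
    linear_combination -h + hpm
  have e3 : Icap (vplus (p, 1-p-m, m)) = ((p^2+m^2) + 2*(1-p-m)*(p+m))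
      - ((p^2+m^2) + 2*(1-p-m)*(p+m)) *
        h2 ((p^2 + 2*(1-p-m)*p) / ((p^2+m^2) + 2*(1-p-m)*(p+m))) := by
    simp only [Icap, vplus]
    rw [show (p^2 + 2*p*(1-p-m)) / (p^2 + 2*p*(1-p-m) + (m^2 + 2*(1-p-m)*m))
        = (p^2 + 2*(1-p-m)*p) / ((p^2+m^2) + 2*(1-p-m)*(p+m)) by
      rw [show p^2 + 2*p*(1-p-m) = p^2 + 2*(1-p-m)*p by ring,
        show p^2 + 2*(1-p-m)*p + (m^2 + 2*(1-p-m)*m) = (p^2+m^2) + 2*(1-p-m)*(p+m) by ring]]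
    ring
  -- Jensen
  have hJ : (p^2+m^2) * h2 (p^2/(p^2+m^2)) + (2*(1-p-m)*(p+m)) * h2 (p/(p+m))
      ≤ ((p^2+m^2) + 2*(1-p-m)*(p+m)) *
        h2 ((p^2 + 2*(1-p-m)*p) / ((p^2+m^2) + 2*(1-p-m)*(p+m))) := by
    have hw2 : 0 ≤ 2*(1-p-m)*(p+m) := by nlinarith
    have hx1 : p^2/(p^2+m^2) ∈ Set.Icc (0:ℝ) 1 :=
      ⟨by positivity, by rw [div_le_one hA]; nlinarith⟩
    have hx2 : p/(p+m) ∈ Set.Icc (0:ℝ) 1 :=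
      ⟨by positivity, by rw [div_le_one hs]; linarith⟩
    have hJ0 := jensen2 (by positivity) hw2 hT hx1 hx2
    have harg : ((p^2+m^2) * (p^2/(p^2+m^2)) + (2*(1-p-m)*(p+m)) * (p/(p+m)))
        / ((p^2+m^2) + 2*(1-p-m)*(p+m))
        = (p^2 + 2*(1-p-m)*p) / ((p^2+m^2) + 2*(1-p-m)*(p+m)) := by
      rw [mul_div_cancel₀ _ hA.ne',
        show (2*(1-p-m)*(p+m)) * (p/(p+m)) = 2*(1-p-m)*p * ((p+m)/(p+m)) by ring,
        div_self hs.ne', mul_one]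
    rw [harg] at hJ0
    exact hJ0
  have hJ2 : (-(2*(p^2 * Real.logb 2 p)) - 2*(m^2 * Real.logb 2 m)
        + (p^2+m^2) * Real.logb 2 (p^2+m^2))
      + 2*(1-p-m)*(-(p * Real.logb 2 p) - m * Real.logb 2 m + (p+m) * Real.logb 2 (p+m))
      ≤ ((p^2+m^2) + 2*(1-p-m)*(p+m)) *
        h2 ((p^2 + 2*(1-p-m)*p) / ((p^2+m^2) + 2*(1-p-m)*(p+m))) := by
    calc _ = (p^2+m^2) * h2 (p^2/(p^2+m^2)) + (2*(1-p-m)*(p+m)) * h2 (p/(p+m)) := by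
          rw [e4]; linear_combination (-2*(1-p-m)) * e5
      _ ≤ _ := hJ
  rw [e1, e2, e3]
  linarith [hJ2]

lemma measurable_logb2 : Measurable (Real.logb 2) := by
  have h : Real.logb 2 = fun x => Real.log x / Real.log 2 := rfl
  rw [h]; exact Real.measurable_log.div_const _

lemma measurable_h2 : Measurable h2 := by
  unfold h2
  exact ((measurable_id.mul measurable_logb2).neg).sub
    ((measurable_const.sub measurable_id).mul
      (measurable_logb2.comp (measurable_const.sub measurable_id)))

lemma measurable_Icap : Measurable Icap := by
  unfold Icap
  exact (measurable_snd.snd.add measurable_fst).mul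
    (measurable_const.sub (measurable_h2.comp
      (measurable_fst.div (measurable_fst.add measurable_snd.snd))))

lemma measurable_vplus : Measurable vplus := by unfold vplus; fun_prop

lemma measurable_vminus : Measurable vminus := by unfold vminus; fun_prop

def Simp (d : ℝ × ℝ × ℝ) : Prop :=
  0 ≤ d.1 ∧ 0 ≤ d.2.1 ∧ 0 ≤ d.2.2 ∧ d.1 + d.2.1 + d.2.2 = 1

lemma Simp_vplus {d : ℝ × ℝ × ℝ} (hd : Simp d) : Simp (vplus d) := by
  obtain ⟨a, b, c, hs⟩ := hd
  simp only [Simp, vplus]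
  refine ⟨?_, ?_, ?_, ?_⟩ <;>
    nlinarith [mul_nonneg a b, mul_nonneg a c, mul_nonneg b c, sq_nonneg d.1, sq_nonneg d.2.1,
      sq_nonneg d.2.2]

lemma Simp_vminus {d : ℝ × ℝ × ℝ} (hd : Simp d) : Simp (vminus d) := by
  obtain ⟨a, b, c, hs⟩ := hd
  simp only [Simp, vminus]
  refine ⟨?_, ?_, ?_, ?_⟩ <;>
    nlinarith [mul_nonneg a b, mul_nonneg a c, mul_nonneg b c, sq_nonneg d.1, sq_nonneg d.2.1,
      sq_nonneg d.2.2]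

lemma Icap_abs {d : ℝ × ℝ × ℝ} (hd : Simp d) : |Icap d| ≤ 1 := by
  obtain ⟨a, b, c, hs⟩ := hd
  have hq : d.1 / (d.1 + d.2.2) ∈ Set.Icc (0:ℝ) 1 := by
    rcases eq_or_lt_of_le (by positivity : (0:ℝ) ≤ d.1 + d.2.2) with h | h
    · have : d.1 = 0 := by linarith
      simp [this, ← h]
    · exact ⟨by positivity, by rw [div_le_one h]; linarith⟩
  have h1 := h2_nonneg hq
  have h2' := h2_le_one (d.1 / (d.1 + d.2.2))
  rw [abs_le]
  unfold Icap
  constructor <;> nlinarith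

lemma key' {d : ℝ × ℝ × ℝ} (hd : Simp d) :
    Icap (vplus d) + Icap (vminus d) ≤ 2 * Icap d := by
  obtain ⟨a, b, c, hs⟩ := hd
  exact key a b c hs


/-- The capacity process `I_n = I(D_n)` of the quantized polarization process is a
supermartingale: `E[I_{n+1} | D_n] ≤ I_n` almost surely. -/
theorem stmt_11 {Ω : Type*} [MeasurableSpace Ω] (μ : Measure Ω) [IsProbabilityMeasure μ]
    (B : ℕ → Ω → Bool) (D : ℕ → Ω → ℝ × ℝ × ℝ) (d₀ : ℝ × ℝ × ℝ)
    (hBmeas : ∀ n, Measurable (B n))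
    (hBindep : iIndepFun B μ)
    (hBfair : ∀ n, μ {ω | B n ω = true} = 1/2)
    (hd₀ : 0 ≤ d₀.1 ∧ 0 ≤ d₀.2.1 ∧ 0 ≤ d₀.2.2 ∧ d₀.1 + d₀.2.1 + d₀.2.2 = 1)
    (hD0 : ∀ ω, D 0 ω = d₀)
    (hstep : ∀ n ω, D (n+1) ω = if B n ω then vplus (D n ω) else vminus (D n ω)) :
    ∀ n, μ[(fun ω => Icap (D (n+1) ω)) | MeasurableSpace.comap (D n) inferInstance]
      ≤ᵐ[μ] fun ω => Icap (D n ω) := by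
  classical
  have hSimp : ∀ k ω, Simp (D k ω) := by
    intro k
    induction k with
    | zero => intro ω; rw [hD0]; exact hd₀
    | succ k ih =>
      intro ω
      rw [hstep]
      by_cases h : B k ω
      · simp only [h, if_true]; exact Simp_vplus (ih ω)
      · simp only [h, if_false]
        exact Simp_vminus (ih ω)
  have hDmeas : ∀ k, Measurable (D k) := by
    intro k
    induction k with
    | zero =>
      have : D 0 = fun _ => d₀ := funext hD0
      rw [this]; exact measurable_const
    | succ k ih =>
      have : D (k+1) = fun ω => if B k ω then vplus (D k ω) else vminus (D k ω) :=
        funext (hstep k)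
      rw [this]
      exact Measurable.ite (hBmeas k (measurableSet_singleton true))
        (measurable_vplus.comp ih) (measurable_vminus.comp ih)
  intro n
  have hmDle : MeasurableSpace.comap (D n) inferInstance ≤ _ := (hDmeas n).comap_le
  have hmBle : MeasurableSpace.comap (B n) inferInstance ≤ _ := (hBmeas n).comap_le
  -- D n is measurable w.r.t. the σ-algebra generated by B_0,...,B_{n-1}
  have hDF : ∀ k, Measurable[⨆ i ∈ Set.Iio k, MeasurableSpace.comap (B i) inferInstance] (D k) := by
    intro k
    induction k with
    | zero =>
      have : D 0 = fun _ => d₀ := funext hD0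
      rw [this]; exact measurable_const
    | succ k ih =>
      have hDk : D (k+1) = fun ω => if B k ω then vplus (D k ω) else vminus (D k ω) :=
        funext (hstep k)
      rw [hDk]
      have hle : (⨆ i ∈ Set.Iio k, MeasurableSpace.comap (B i) inferInstance)
          ≤ ⨆ i ∈ Set.Iio (k+1), MeasurableSpace.comap (B i) inferInstance :=
        biSup_mono (fun i hi => lt_trans hi (Nat.lt_succ_self k))
      have hBk : MeasurableSpace.comap (B k) inferInstance
          ≤ ⨆ i ∈ Set.Iio (k+1), MeasurableSpace.comap (B i) inferInstance :=
        le_biSup (fun i => MeasurableSpace.comap (B i) inferInstance)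
          (show k ∈ Set.Iio (k+1) from Set.mem_Iio.mpr (Nat.lt_succ_self k))
      have hBk' : Measurable[⨆ i ∈ Set.Iio (k+1), MeasurableSpace.comap (B i) inferInstance]
          (B k) := Measurable.of_comap_le hBk
      have hDk' : Measurable[⨆ i ∈ Set.Iio (k+1), MeasurableSpace.comap (B i) inferInstance]
          (D k) := ih.mono hle le_rfl
      exact Measurable.ite (hBk' (measurableSet_singleton true))
        (measurable_vplus.comp hDk') (measurable_vminus.comp hDk')
  have hIndep : Indep (MeasurableSpace.comap (B n) inferInstance)
      (MeasurableSpace.comap (D n) inferInstance) μ := by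
    have h1 : Indep (⨆ i ∈ ({n} : Set ℕ), MeasurableSpace.comap (B i) inferInstance)
        (⨆ i ∈ Set.Iio n, MeasurableSpace.comap (B i) inferInstance) μ := by
      refine indep_iSup_of_disjoint (fun i => (hBmeas i).comap_le) hBindep ?_
      rw [Set.disjoint_left]
      intro a ha ha'
      simp only [Set.mem_singleton_iff] at ha
      simp only [Set.mem_Iio] at ha'
      omega
    have h2 : (⨆ i ∈ ({n} : Set ℕ), MeasurableSpace.comap (B i) inferInstance)
        = MeasurableSpace.comap (B n) inferInstance := by simp
    rw [h2] at h1
    exact indep_of_indep_of_le_right h1 (measurable_iff_comap_le.mp (hDF n))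
  -- the four pieces
  set Fp : Ω → ℝ := fun ω => Icap (vplus (D n ω)) with hFp
  set Fm : Ω → ℝ := fun ω => Icap (vminus (D n ω)) with hFm
  set Xp : Ω → ℝ := fun ω => if B n ω then (1:ℝ) else 0 with hXp
  set Xm : Ω → ℝ := fun ω => if B n ω then (0:ℝ) else 1 with hXm
  have hFpMeas : Measurable Fp := (measurable_Icap.comp measurable_vplus).comp (hDmeas n)
  have hFmMeas : Measurable Fm := (measurable_Icap.comp measurable_vminus).comp (hDmeas n)
  have hXpMeas : Measurable Xp :=
    Measurable.ite (hBmeas n (measurableSet_singleton true)) measurable_const measurable_const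
  have hXmMeas : Measurable Xm :=
    Measurable.ite (hBmeas n (measurableSet_singleton true)) measurable_const measurable_const
  have hFpBd : ∀ ω, |Fp ω| ≤ 1 := fun ω => Icap_abs (Simp_vplus (hSimp n ω))
  have hFmBd : ∀ ω, |Fm ω| ≤ 1 := fun ω => Icap_abs (Simp_vminus (hSimp n ω))
  have hXpBd : ∀ ω, |Xp ω| ≤ 1 := fun ω => by by_cases h : B n ω <;> simp [hXp, h]
  have hXmBd : ∀ ω, |Xm ω| ≤ 1 := fun ω => by by_cases h : B n ω <;> simp [hXm, h]
  have intOf : ∀ (f : Ω → ℝ), Measurable f → (∀ ω, |f ω| ≤ 1) → Integrable f μ := by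
    intro f hf hbd
    refine (integrable_const (1:ℝ)).mono' hf.aestronglyMeasurable ?_
    exact Filter.Eventually.of_forall fun ω => by simpa [Real.norm_eq_abs] using hbd ω
  have hXpInt : Integrable Xp μ := intOf _ hXpMeas hXpBd
  have hXmInt : Integrable Xm μ := intOf _ hXmMeas hXmBd
  have hFpXpInt : Integrable (Fp * Xp) μ := by
    refine intOf _ (hFpMeas.mul hXpMeas) fun ω => ?_
    calc |(Fp * Xp) ω| = |Fp ω| * |Xp ω| := abs_mul _ _
      _ ≤ 1 * 1 := mul_le_mul (hFpBd ω) (hXpBd ω) (abs_nonneg _) zero_le_one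
      _ = 1 := one_mul 1
  have hFmXmInt : Integrable (Fm * Xm) μ := by
    refine intOf _ (hFmMeas.mul hXmMeas) fun ω => ?_
    calc |(Fm * Xm) ω| = |Fm ω| * |Xm ω| := abs_mul _ _
      _ ≤ 1 * 1 := mul_le_mul (hFmBd ω) (hXmBd ω) (abs_nonneg _) zero_le_one
      _ = 1 := one_mul 1
  -- decomposition
  have hdec : (fun ω => Icap (D (n+1) ω)) = Fp * Xp + Fm * Xm := by
    funext ω
    by_cases h : B n ω <;>
      simp [hstep n ω, h, hFp, hFm, hXp, hXm]
  -- strong measurability pieces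
  have hFpSM : StronglyMeasurable[MeasurableSpace.comap (D n) inferInstance] Fp :=
    ((measurable_Icap.comp measurable_vplus).comp
      (Measurable.of_comap_le le_rfl)).stronglyMeasurable
  have hFmSM : StronglyMeasurable[MeasurableSpace.comap (D n) inferInstance] Fm :=
    ((measurable_Icap.comp measurable_vminus).comp
      (Measurable.of_comap_le le_rfl)).stronglyMeasurable
  have hXpSM : StronglyMeasurable[MeasurableSpace.comap (B n) inferInstance] Xp := by
    have h : Xp = (fun b : Bool => if b then (1:ℝ) else 0) ∘ B n := rfl
    rw [h]
    exact (measurable_from_top.comp (Measurable.of_comap_le le_rfl)).stronglyMeasurable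
  have hXmSM : StronglyMeasurable[MeasurableSpace.comap (B n) inferInstance] Xm := by
    have h : Xm = (fun b : Bool => if b then (0:ℝ) else 1) ∘ B n := rfl
    rw [h]
    exact (measurable_from_top.comp (Measurable.of_comap_le le_rfl)).stronglyMeasurable
  -- integrals of Xp, Xm
  have hXpVal : ∫ ω, Xp ω ∂μ = 1/2 := by
    have hXi : Xp = Set.indicator {ω | B n ω = true} 1 := by
      funext ω
      by_cases h : B n ω <;> simp [hXp, h, Set.indicator]
    have hsm : MeasurableSet {ω | B n ω = true} := hBmeas n (measurableSet_singleton true)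
    rw [hXi, integral_indicator_one hsm, measureReal_def, hBfair n]
    simp [ENNReal.toReal_div]
  have hXmVal : ∫ ω, Xm ω ∂μ = 1/2 := by
    have hXi : Xm = fun ω => 1 - Xp ω := by
      funext ω; by_cases h : B n ω <;> simp [hXp, hXm, h]
    rw [hXi, integral_sub (integrable_const 1) hXpInt, hXpVal]
    simp [measure_univ]
    norm_num
  -- conditional expectation computation
  have h1 : μ[(fun ω => Icap (D (n+1) ω)) | MeasurableSpace.comap (D n) inferInstance]
      =ᵐ[μ] μ[Fp * Xp | MeasurableSpace.comap (D n) inferInstance]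
        + μ[Fm * Xm | MeasurableSpace.comap (D n) inferInstance] := by
    rw [hdec]
    exact condExp_add hFpXpInt hFmXmInt _
  have h2p : μ[Fp * Xp | MeasurableSpace.comap (D n) inferInstance]
      =ᵐ[μ] Fp * μ[Xp | MeasurableSpace.comap (D n) inferInstance] :=
    condExp_mul_of_stronglyMeasurable_left hFpSM hFpXpInt hXpInt
  have h2m : μ[Fm * Xm | MeasurableSpace.comap (D n) inferInstance]
      =ᵐ[μ] Fm * μ[Xm | MeasurableSpace.comap (D n) inferInstance] :=
    condExp_mul_of_stronglyMeasurable_left hFmSM hFmXmInt hXmInt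
  have h3p : μ[Xp | MeasurableSpace.comap (D n) inferInstance] =ᵐ[μ] fun _ => μ[Xp] :=
    condExp_indep_eq hmBle hmDle hXpSM hIndep
  have h3m : μ[Xm | MeasurableSpace.comap (D n) inferInstance] =ᵐ[μ] fun _ => μ[Xm] :=
    condExp_indep_eq hmBle hmDle hXmSM hIndep
  filter_upwards [h1, h2p, h2m, h3p, h3m] with ω e1 e2 e3 e4 e5
  have hkey := key' (hSimp n ω)
  have hv : (μ[(fun ω => Icap (D (n+1) ω)) | MeasurableSpace.comap (D n) inferInstance]) ω
      = Fp ω * (μ[Xp | MeasurableSpace.comap (D n) inferInstance]) ω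
        + Fm ω * (μ[Xm | MeasurableSpace.comap (D n) inferInstance]) ω := by
    rw [e1, Pi.add_apply, e2, e3, Pi.mul_apply, Pi.mul_apply]
  rw [hv, e4, e5, hXpVal, hXmVal]
  have hFpω : Fp ω = Icap (vplus (D n ω)) := rfl
  have hFmω : Fm ω = Icap (vminus (D n ω)) := rfl
  rw [hFpω, hFmω]
  linarith
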